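/- arXiv:0905.2479 — 7 statements merged into one kernel-verified Lean document; each statement's English description precedes it below -/
import Mathlib

section
/- Let a_1,...,a_B > 0 and x_1,...,x_B > 0 be real numbers, and define D_n = a_n x_n / (∑_m a_m x_m) - x_n / (∑_m x_m). Let T_0 = {n : D_n ≥ 0} and T_1 = {n : D_n < 0}. Then ∑_{n ∈ T_0} D_n = ∑_{n ∈ T_1} |D_n|, and this common value is at most (1 - √(a/A)) / (1 + √(a/A)), where a = min_n a_n and A = max_n a_n. -/
theorem stmt2 (B : ℕ) (hB : 0 < B) (a x : Fin B → ℝ) (ha : ∀ i, 0 < a i)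
    (hx : ∀ i, 0 < x i) (D : Fin B → ℝ)
    (hD : ∀ n, D n = a n * x n / (∑ m, a m * x m) - x n / (∑ m, x m))
    (amin amax : ℝ) (hmin : IsLeast (Set.range a) amin)
    (hmax : IsGreatest (Set.range a) amax) :
    (∑ n ∈ Finset.univ.filter (fun n => 0 ≤ D n), D n) =
      (∑ n ∈ Finset.univ.filter (fun n => D n < 0), |D n|) ∧
    (∑ n ∈ Finset.univ.filter (fun n => 0 ≤ D n), D n) ≤
      (1 - Real.sqrt (amin / amax)) / (1 + Real.sqrt (amin / amax)) := by
  have hne : (Finset.univ : Finset (Fin B)).Nonempty := ⟨⟨0, hB⟩, Finset.mem_univ _⟩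
  set S := ∑ m, a m * x m with hS
  set X := ∑ m, x m with hX
  have hXpos : 0 < X := Finset.sum_pos (fun i _ => hx i) hne
  have hSpos : 0 < S := Finset.sum_pos (fun i _ => mul_pos (ha i) (hx i)) hne
  obtain ⟨⟨i0, hi0⟩, hminle⟩ := hmin
  obtain ⟨⟨i1, hi1⟩, hmaxge⟩ := hmax
  have haminpos : 0 < amin := hi0 ▸ ha i0
  have hamaxpos : 0 < amax := hi1 ▸ ha i1
  have hle : ∀ i, amin ≤ a i := fun i => hminle ⟨i, rfl⟩
  have hge : ∀ i, a i ≤ amax := fun i => hmaxge ⟨i, rfl⟩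
  -- total sum is zero
  have h1 : ∑ n, a n * x n / S = 1 := by
    rw [← Finset.sum_div, ← hS]; exact div_self hSpos.ne'
  have h2 : ∑ n, x n / X = 1 := by
    rw [← Finset.sum_div, ← hX]; exact div_self hXpos.ne'
  have hsum0 : ∑ n, D n = 0 := by
    calc ∑ n, D n = ∑ n, (a n * x n / S - x n / X) :=
          Finset.sum_congr rfl fun n _ => hD n
      _ = (∑ n, a n * x n / S) - ∑ n, x n / X := Finset.sum_sub_distrib _ _
      _ = 0 := by rw [h1, h2]; ring
  have hT1eq : (Finset.univ.filter (fun n => D n < 0)) =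
      (Finset.univ.filter (fun n => ¬ 0 ≤ D n)) := by
    simp [not_le]
  have hsplit : (∑ n ∈ Finset.univ.filter (fun n => 0 ≤ D n), D n)
      + (∑ n ∈ Finset.univ.filter (fun n => D n < 0), D n) = 0 := by
    rw [hT1eq, Finset.sum_filter_add_sum_filter_not]
    exact hsum0
  have part1 : (∑ n ∈ Finset.univ.filter (fun n => 0 ≤ D n), D n) =
      (∑ n ∈ Finset.univ.filter (fun n => D n < 0), |D n|) := by
    have habs : (∑ n ∈ Finset.univ.filter (fun n => D n < 0), |D n|)
        = ∑ n ∈ Finset.univ.filter (fun n => D n < 0), (- D n) := by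
      refine Finset.sum_congr rfl fun n hn => ?_
      exact abs_of_neg (Finset.mem_filter.mp hn).2
    rw [habs, Finset.sum_neg_distrib]
    linarith
  refine ⟨part1, ?_⟩
  set c := X / S with hc
  have hcpos : 0 < c := div_pos hXpos hSpos
  have hDc : ∀ n, D n = x n / X * (a n * c - 1) := by
    intro n
    rw [hD n, hc]
    field_simp
  -- bounds on S
  have hSle : S ≤ amax * X := by
    rw [hS, hX, Finset.mul_sum]
    exact Finset.sum_le_sum fun i _ => mul_le_mul_of_nonneg_right (hge i) (hx i).le
  have hSge : amin * X ≤ S := by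
    rw [hS, hX, Finset.mul_sum]
    exact Finset.sum_le_sum fun i _ => mul_le_mul_of_nonneg_right (hle i) (hx i).le
  have hu : 0 ≤ 1 - amin * c := by
    rw [hc, ← mul_div_assoc, sub_nonneg, div_le_one hSpos]
    exact hSge
  have hv : 0 ≤ amax * c - 1 := by
    rw [hc, ← mul_div_assoc, sub_nonneg, le_div_iff₀ hSpos, one_mul]
    exact hSle
  set T0 := Finset.univ.filter (fun n => 0 ≤ D n) with hT0def
  set T1 := Finset.univ.filter (fun n => D n < 0) with hT1def
  set p := ∑ n ∈ T0, x n / X with hp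
  set q := ∑ n ∈ T1, x n / X with hq
  have hppos : 0 ≤ p :=
    Finset.sum_nonneg fun n _ => div_nonneg (hx n).le hXpos.le
  have hqpos : 0 ≤ q :=
    Finset.sum_nonneg fun n _ => div_nonneg (hx n).le hXpos.le
  have hpq : p + q = 1 := by
    have hq' : q = ∑ n ∈ Finset.univ.filter (fun n => ¬ 0 ≤ D n), x n / X := by
      rw [hq, hT1eq]
    rw [hp, hq', hT0def, Finset.sum_filter_add_sum_filter_not]
    exact h2
  set TV := ∑ n ∈ T0, D n with hTV
  have hb1 : TV ≤ p * (amax * c - 1) := by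
    rw [hp, Finset.sum_mul, hTV]
    refine Finset.sum_le_sum fun n _ => ?_
    rw [hDc n]
    have hxn : 0 ≤ x n / X := div_nonneg (hx n).le hXpos.le
    have h2' : a n * c - 1 ≤ amax * c - 1 := by
      have := hge n; nlinarith
    exact mul_le_mul_of_nonneg_left h2' hxn
  have hb2 : TV ≤ q * (1 - amin * c) := by
    have hTV' : TV = ∑ n ∈ T1, (- D n) := by
      rw [Finset.sum_neg_distrib]
      linarith [hsplit]
    rw [hq, Finset.sum_mul, hTV']
    refine Finset.sum_le_sum fun n _ => ?_
    rw [hDc n]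
    have hxn : 0 ≤ x n / X := div_nonneg (hx n).le hXpos.le
    have h2' : 1 - a n * c ≤ 1 - amin * c := by
      have := hle n; nlinarith
    nlinarith
  -- case split on amin = amax
  rcases eq_or_lt_of_le (le_trans (hle i0) (hge i0)) with heq | hlt
  · -- amin = amax : all a i equal, D = 0
    have haeq : ∀ i, a i = amin := fun i => le_antisymm (heq ▸ hge i) (hle i)
    have hTV0 : TV = 0 := by
      rw [hTV]
      refine Finset.sum_eq_zero fun n _ => ?_
      have hSX : S = amin * X := by
        rw [hS, hX, Finset.mul_sum]
        exact Finset.sum_congr rfl fun i _ => by rw [haeq i]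
      rw [hD n, hSX, haeq n]
      field_simp
      ring
    rw [hTV0, heq]
    have : Real.sqrt (amax / amax) = 1 := by
      rw [div_self hamaxpos.ne', Real.sqrt_one]
    rw [this]
    norm_num
  · -- amin < amax
    set sa := Real.sqrt amin with hsa
    set sA := Real.sqrt amax with hsA
    have hsa2 : sa ^ 2 = amin := Real.sq_sqrt haminpos.le
    have hsA2 : sA ^ 2 = amax := Real.sq_sqrt hamaxpos.le
    have hsapos : 0 < sa := Real.sqrt_pos.mpr haminpos
    have hsApos : 0 < sA := Real.sqrt_pos.mpr hamaxpos
    have hsumne : sA + sa ≠ 0 := by linarith [hsapos, hsApos]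
    have hRdiv : Real.sqrt (amin / amax) = sa / sA := by
      rw [hsa, hsA, Real.sqrt_div haminpos.le]
    have hReq : (1 - Real.sqrt (amin / amax)) / (1 + Real.sqrt (amin / amax))
        = (sA - sa) / (sA + sa) := by
      rw [hRdiv]
      have hd : (0:ℝ) < 1 + sa / sA := by
        have := div_pos hsapos hsApos; linarith
      rw [div_eq_div_iff hd.ne' hsumne]
      field_simp
    rw [hReq]
    clear_value TV p q c S X sa sA
    -- key: TV * (u + v) ≤ u * v
    have e1 : TV * (1 - amin * c) ≤ p * (amax * c - 1) * (1 - amin * c) :=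
      mul_le_mul_of_nonneg_right hb1 hu
    have e2 : TV * (amax * c - 1) ≤ q * (1 - amin * c) * (amax * c - 1) :=
      mul_le_mul_of_nonneg_right hb2 hv
    have e3 : p * (amax * c - 1) * (1 - amin * c) + q * (1 - amin * c) * (amax * c - 1)
        = (1 - amin * c) * (amax * c - 1) := by
      linear_combination ((1 - amin * c) * (amax * c - 1)) * hpq
    have hkey : TV * ((1 - amin * c) + (amax * c - 1)) ≤ (1 - amin * c) * (amax * c - 1) := by
      linarith [e1, e2, e3]
    have hsumpos : 0 < (amax - amin) * c := mul_pos (by linarith) hcpos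
    have hkey1 : TV * ((amax - amin) * c) ≤ (1 - amin * c) * (amax * c - 1) := by
      have : (1 - amin * c) + (amax * c - 1) = (amax - amin) * c := by ring
      rw [← this]; exact hkey
    have hkey2 : (1 - amin * c) * (amax * c - 1)
        ≤ ((sA - sa) / (sA + sa)) * ((amax - amin) * c) := by
      have ha1 : (1 - amin * c) * (amax * c - 1) ≤ c * (sA - sa) ^ 2 := by
        rw [← hsa2, ← hsA2]
        have hid : c * (sA - sa) ^ 2 - (1 - sa ^ 2 * c) * (sA ^ 2 * c - 1)
            = (sa * sA * c - 1) ^ 2 := by ring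
        linarith [sq_nonneg (sa * sA * c - 1), hid]
      have ha2 : ((sA - sa) / (sA + sa)) * ((amax - amin) * c) = c * (sA - sa) ^ 2 := by
        rw [← hsa2, ← hsA2]
        field_simp
        ring
      linarith
    have hfin : TV * ((amax - amin) * c) ≤ ((sA - sa) / (sA + sa)) * ((amax - amin) * c) :=
      le_trans hkey1 hkey2
    exact (mul_le_mul_iff_of_pos_right hsumpos).mp hfin
end

section
/- The function d_H(v, w) = max over pairs (i, j) of |Log((w_i / w_j) / (v_i / v_j))| defines a metric on the set W_ℂ^+ = {w ∈ ℂ^B : ∑_i w_i = 1, Re(w_i) > 0 for all i}, where Log is the principal branch of the complex logarithm. -/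
open Complex

lemma aux_abs_log_inv (z : ℂ) :
    ‖Complex.log z⁻¹‖ = ‖Complex.log z‖ := by
  rcases eq_or_ne z 0 with rfl | hz
  · simp
  have h2 : z⁻¹.arg ^ 2 = z.arg ^ 2 := by
    rw [← _root_.sq_abs, Complex.abs_arg_inv, _root_.sq_abs]
  rw [Complex.norm_def, Complex.norm_def]
  congr 1
  simp only [Complex.normSq_apply, Complex.log_re, Complex.log_im, norm_inv, Real.log_inv]
  nlinarith [h2]

lemma aux_abs_arg_mul_le {a b : ℂ} (ha : a ≠ 0) (hb : b ≠ 0) :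
    |(a * b).arg| ≤ |a.arg| + |b.arg| := by
  have hab : ((a * b).arg : Real.Angle) = ((a.arg + b.arg : ℝ) : Real.Angle) := by
    rw [Complex.arg_mul_coe_angle ha hb, Real.Angle.coe_add]
  rw [Real.Angle.angle_eq_iff_two_pi_dvd_sub] at hab
  obtain ⟨k, hk⟩ := hab
  have hπ := Real.pi_pos
  have h1 := Complex.neg_pi_lt_arg (a * b)
  have h2 := Complex.arg_le_pi (a * b)
  have h3 := Complex.neg_pi_lt_arg a
  have h4 := Complex.arg_le_pi a
  have h5 := Complex.neg_pi_lt_arg b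
  have h6 := Complex.arg_le_pi b
  have hk1 : (k : ℝ) < 2 := by nlinarith
  have hk2 : (-2 : ℝ) < (k : ℝ) := by nlinarith
  have hk1' : k ≤ 1 := by exact_mod_cast Int.lt_add_one_iff.mp (by exact_mod_cast hk1)
  have hk2' : (-1 : ℤ) ≤ k := by
    have : (-2 : ℤ) < k := by exact_mod_cast hk2
    omega
  have key : |(a * b).arg| ≤ |a.arg + b.arg| := by
    interval_cases k <;>
      [skip; skip; skip] <;>
      · simp only [Int.cast_neg, Int.cast_one, Int.cast_zero] at hk
        rcases abs_cases (a * b).arg with ⟨e1, f1⟩ | ⟨e1, f1⟩ <;>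
          rcases abs_cases (a.arg + b.arg) with ⟨e2, f2⟩ | ⟨e2, f2⟩ <;> linarith
  exact key.trans (abs_add_le _ _)

lemma aux_abs_log_mul_le (a b : ℂ) :
    ‖Complex.log (a * b)‖ ≤
      ‖Complex.log a‖ + ‖Complex.log b‖ := by
  rcases eq_or_ne a 0 with rfl | ha
  · simp [Complex.log_zero]
  rcases eq_or_ne b 0 with rfl | hb
  · simp [Complex.log_zero]
  set x1 := Real.log (‖a‖) with hx1
  set x2 := Real.log (‖b‖) with hx2
  set y1 := a.arg with hy1
  set y2 := b.arg with hy2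
  have harg : |(a * b).arg| ≤ |y1| + |y2| := aux_abs_arg_mul_le ha hb
  set c1 : ℂ := ⟨|x1|, |y1|⟩ with hc1
  set c2 : ℂ := ⟨|x2|, |y2|⟩ with hc2
  have e1 : ‖Complex.log a‖ = ‖c1‖ := by
    rw [Complex.norm_def, Complex.norm_def]
    congr 1
    simp only [Complex.normSq_apply, Complex.log_re, Complex.log_im, hc1]
    rw [← hx1, ← hy1, ← abs_mul_self x1, ← abs_mul_self y1, abs_mul_abs_self, abs_mul_abs_self]
    rw [abs_mul_self, abs_mul_self]
  have e2 : ‖Complex.log b‖ = ‖c2‖ := by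
    rw [Complex.norm_def, Complex.norm_def]
    congr 1
    simp only [Complex.normSq_apply, Complex.log_re, Complex.log_im, hc2]
    rw [← hx2, ← hy2, abs_mul_abs_self, abs_mul_abs_self]
  have e3 : ‖Complex.log (a * b)‖ ≤ ‖c1 + c2‖ := by
    rw [Complex.norm_def, Complex.norm_def]
    apply Real.sqrt_le_sqrt
    simp only [Complex.normSq_apply, Complex.log_re, Complex.log_im, Complex.add_re,
      Complex.add_im, hc1, hc2, norm_mul, Real.log_mul ((norm_ne_zero_iff.mpr ha))
      ((norm_ne_zero_iff.mpr hb)), ← hx1, ← hx2]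
    have hre : (x1 + x2) * (x1 + x2) ≤ (|x1| + |x2|) * (|x1| + |x2|) := by
      nlinarith [abs_nonneg x1, abs_nonneg x2, le_abs_self x1, le_abs_self x2,
        neg_abs_le x1, neg_abs_le x2]
    have him : (a * b).arg * (a * b).arg ≤ (|y1| + |y2|) * (|y1| + |y2|) := by
      nlinarith [abs_nonneg (a * b).arg, le_abs_self (a * b).arg, neg_abs_le (a * b).arg,
        abs_nonneg y1, abs_nonneg y2]
    exact add_le_add hre him
  calc ‖Complex.log (a * b)‖ ≤ ‖c1 + c2‖ := e3
    _ ≤ ‖c1‖ + ‖c2‖ := norm_add_le _ _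
    _ = _ := by rw [← e1, ← e2]

theorem stmt5 (B : ℕ) (hB : 0 < B)
    (d : (Fin B → ℂ) → (Fin B → ℂ) → ℝ)
    (hd : ∀ v w, d v w =
      ⨆ p : Fin B × Fin B, ‖Complex.log ((w p.1 / w p.2) / (v p.1 / v p.2))‖)
    (S : Set (Fin B → ℂ))
    (hS : S = {w | (∑ i, w i) = 1 ∧ ∀ i, 0 < (w i).re}) :
    (∀ v ∈ S, ∀ w ∈ S, d v w = d w v) ∧
    (∀ v ∈ S, ∀ w ∈ S, (d v w = 0 ↔ v = w)) ∧
    (∀ u ∈ S, ∀ v ∈ S, ∀ w ∈ S, d u w ≤ d u v + d v w) := by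
  subst hS
  have hne : Nonempty (Fin B × Fin B) := ⟨(⟨0, hB⟩, ⟨0, hB⟩)⟩
  have hnz : ∀ v : Fin B → ℂ, (∀ i, 0 < (v i).re) → ∀ i, v i ≠ 0 := by
    intro v hv i h
    have := hv i
    rw [h] at this
    simp at this
  refine ⟨?_, ?_, ?_⟩
  · -- symmetry
    intro v _ w _
    rw [hd, hd]
    congr 1
    funext p
    rw [← aux_abs_log_inv, inv_div]
  · -- zero iff eq
    rintro v ⟨hv1, hv2⟩ w ⟨hw1, hw2⟩
    have hvnz := hnz v hv2
    have hwnz := hnz w hw2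
    constructor
    · intro h0
      rw [hd] at h0
      have hbdd : BddAbove (Set.range fun p : Fin B × Fin B =>
          ‖Complex.log ((w p.1 / w p.2) / (v p.1 / v p.2))‖) :=
        Set.Finite.bddAbove (Set.finite_range _)
      have hterm : ∀ p : Fin B × Fin B,
          ‖Complex.log ((w p.1 / w p.2) / (v p.1 / v p.2))‖ = 0 := by
        intro p
        have hle := le_ciSup hbdd p
        rw [h0] at hle
        exact le_antisymm hle (norm_nonneg _)
      have hratio : ∀ i j : Fin B, w i * v j = v i * w j := by
        intro i j
        have h := hterm (i, j)
        have hlog : Complex.log ((w i / w j) / (v i / v j)) = 0 := by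
          simpa using norm_eq_zero.mp h
        have hr : (w i / w j) / (v i / v j) ≠ 0 := by
          apply div_ne_zero (div_ne_zero (hwnz i) (hwnz j)) (div_ne_zero (hvnz i) (hvnz j))
        have : (w i / w j) / (v i / v j) = 1 := by
          have := Complex.exp_log hr
          rw [hlog, Complex.exp_zero] at this
          exact this.symm
        rw [div_eq_one_iff_eq (div_ne_zero (hvnz i) (hvnz j)),
          div_eq_div_iff (hwnz j) (hvnz j)] at this
        exact this
      funext i
      have : v i * (∑ j, w j) = w i * (∑ j, v j) := by
        rw [Finset.mul_sum, Finset.mul_sum]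
        exact Finset.sum_congr rfl fun j _ => (hratio i j).symm
      rw [hv1, hw1, mul_one, mul_one] at this
      exact this
    · rintro rfl
      rw [hd]
      have hz : ∀ p : Fin B × Fin B,
          ‖Complex.log ((v p.1 / v p.2) / (v p.1 / v p.2))‖ = 0 := by
        intro p
        rw [div_self (div_ne_zero (hvnz p.1) (hvnz p.2)), Complex.log_one, norm_zero]
      simp only [hz]
      exact ciSup_const
  · -- triangle
    rintro u ⟨hu1, hu2⟩ v ⟨hv1, hv2⟩ w ⟨hw1, hw2⟩
    have hunz := hnz u hu2
    have hvnz := hnz v hv2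
    have hwnz := hnz w hw2
    rw [hd, hd, hd]
    apply ciSup_le
    intro p
    have hfac : (w p.1 / w p.2) / (u p.1 / u p.2) =
        ((v p.1 / v p.2) / (u p.1 / u p.2)) * ((w p.1 / w p.2) / (v p.1 / v p.2)) := by
      field_simp [hwnz p.1, hwnz p.2, hunz p.1, hunz p.2, hvnz p.1, hvnz p.2]
    rw [hfac]
    calc ‖Complex.log (((v p.1 / v p.2) / (u p.1 / u p.2)) *
          ((w p.1 / w p.2) / (v p.1 / v p.2)))‖
        ≤ ‖Complex.log ((v p.1 / v p.2) / (u p.1 / u p.2))‖ +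
          ‖Complex.log ((w p.1 / w p.2) / (v p.1 / v p.2))‖ :=
        aux_abs_log_mul_le _ _
      _ ≤ _ := add_le_add
          (le_ciSup (f := fun q : Fin B × Fin B =>
            ‖Complex.log ((v q.1 / v q.2) / (u q.1 / u q.2))‖)
            (Set.Finite.bddAbove (Set.finite_range _)) p)
          (le_ciSup (f := fun q : Fin B × Fin B =>
            ‖Complex.log ((w q.1 / w q.2) / (v q.1 / v q.2))‖)
            (Set.Finite.bddAbove (Set.finite_range _)) p)
end

section
/- Let T = [[a, c], [b, d]] be a 2×2 matrix with strictly positive entries and ad - bc ≥ 0, and let f_T(z) = (a z + b)/(c z + d). Then f_T maps the open right half-plane H into itself, and for all z_1 ≠ z_2 in H, |Log(f_T(z_1)) - Log(f_T(z_2))| ≤ τ(T) |Log(z_1) - Log(z_2)|, where τ(T) = (1 - bc/(ad)) / (1 + bc/(ad)) < 1 and Log is the principal branch of the logarithm. -/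
open Complex Real

private lemma key_ineq (a b c d : ℝ) (ha : 0 < a) (hb : 0 < b) (hc : 0 < c) (hd : 0 < d)
    (z : ℂ) (hz : 0 ≤ z.re) :
    (a * d + b * c) * ‖z‖ ≤
      ‖(a : ℂ) * z + b‖ * ‖(c : ℂ) * z + d‖ := by
  set x := z.re with hx
  set y := z.im with hy
  have hA : (‖z‖) ^ 2 = x ^ 2 + y ^ 2 := by
    rw [Complex.sq_norm, Complex.normSq_apply]; ring
  have hBre : ((a : ℂ) * z + b).re = a * x + b := by simp [Complex.add_re, Complex.mul_re, hx]
  have hBim : ((a : ℂ) * z + b).im = a * y := by simp [Complex.add_im, Complex.mul_im, hy]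
  have hCre : ((c : ℂ) * z + d).re = c * x + d := by simp [Complex.add_re, Complex.mul_re, hx]
  have hCim : ((c : ℂ) * z + d).im = c * y := by simp [Complex.add_im, Complex.mul_im, hy]
  have hB : (‖(a : ℂ) * z + b‖) ^ 2 = (a * x + b) ^ 2 + (a * y) ^ 2 := by
    rw [Complex.sq_norm, Complex.normSq_apply, hBre, hBim]; ring
  have hC : (‖(c : ℂ) * z + d‖) ^ 2 = (c * x + d) ^ 2 + (c * y) ^ 2 := by
    rw [Complex.sq_norm, Complex.normSq_apply, hCre, hCim]; ring
  have h1 : 0 ≤ (a * d + b * c) * ‖z‖ := by positivity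
  have h2 : 0 ≤ ‖(a : ℂ) * z + b‖ * ‖(c : ℂ) * z + d‖ := by positivity
  have hsq : ((a * d + b * c) * ‖z‖) ^ 2 ≤
      (‖(a : ℂ) * z + b‖ * ‖(c : ℂ) * z + d‖) ^ 2 := by
    have e1 : ((a * d + b * c) * ‖z‖) ^ 2 = (a * d + b * c) ^ 2 * (x ^ 2 + y ^ 2) := by
      rw [mul_pow, hA]
    have e2 : (‖(a : ℂ) * z + b‖ * ‖(c : ℂ) * z + d‖) ^ 2 =
        ((a * x + b) ^ 2 + (a * y) ^ 2) * ((c * x + d) ^ 2 + (c * y) ^ 2) := by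
      rw [mul_pow, hB, hC]
    rw [e1, e2]
    nlinarith [sq_nonneg (a * c * (x ^ 2 + y ^ 2) - b * d),
      mul_nonneg (mul_nonneg hz (by positivity : (0:ℝ) ≤ a * d + b * c))
        (by positivity : (0:ℝ) ≤ a * c * (x ^ 2 + y ^ 2) + b * d),
      mul_nonneg (by positivity : (0:ℝ) ≤ 4 * a * b * c * d) (sq_nonneg x)]
  nlinarith [hsq, h1, h2]

private lemma re_pos_aux (a b c d : ℝ) (ha : 0 < a) (hb : 0 < b) (hc : 0 < c) (hd : 0 < d)
    (z : ℂ) (hz : 0 < z.re) : 0 < (((a : ℂ) * z + b) / ((c : ℂ) * z + d)).re := by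
  have hden : (0:ℝ) < Complex.normSq ((c : ℂ) * z + d) := by
    apply Complex.normSq_pos.mpr
    intro h
    have : ((c : ℂ) * z + d).re = c * z.re + d := by simp [Complex.add_re, Complex.mul_re]
    rw [h] at this
    simp at this
    nlinarith
  rw [Complex.div_re]
  have h1 : ((a : ℂ) * z + b).re = a * z.re + b := by simp [Complex.add_re, Complex.mul_re]
  have h2 : ((a : ℂ) * z + b).im = a * z.im := by simp [Complex.add_im, Complex.mul_im]
  have h3 : ((c : ℂ) * z + d).re = c * z.re + d := by simp [Complex.add_re, Complex.mul_re]
  have h4 : ((c : ℂ) * z + d).im = c * z.im := by simp [Complex.add_im, Complex.mul_im]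
  rw [h1, h2, h3, h4]
  have hnum : 0 < (a * z.re + b) * (c * z.re + d) + a * z.im * (c * z.im) := by
    nlinarith [mul_pos (show 0 < a * z.re + b by nlinarith) (show 0 < c * z.re + d by nlinarith),
      mul_nonneg (mul_nonneg ha.le hc.le) (sq_nonneg z.im)]
  calc 0 < ((a * z.re + b) * (c * z.re + d) + a * z.im * (c * z.im)) / Complex.normSq ((c:ℂ)*z+d) :=
        div_pos hnum hden
    _ = (a * z.re + b) * (c * z.re + d) / Complex.normSq ((c:ℂ)*z+d) +
        a * z.im * (c * z.im) / Complex.normSq ((c:ℂ)*z+d) := by ring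

theorem stmt8 (a b c d : ℝ) (ha : 0 < a) (hb : 0 < b) (hc : 0 < c) (hd : 0 < d)
    (hdet : b * c ≤ a * d)
    (f : ℂ → ℂ) (hf : ∀ z, f z = ((a : ℂ) * z + b) / ((c : ℂ) * z + d))
    (τ : ℝ) (hτ : τ = (1 - b * c / (a * d)) / (1 + b * c / (a * d))) :
    (∀ z : ℂ, 0 < z.re → 0 < (f z).re) ∧ τ < 1 ∧
    (∀ z₁ z₂ : ℂ, 0 < z₁.re → 0 < z₂.re → z₁ ≠ z₂ →
      ‖Complex.log (f z₁) - Complex.log (f z₂)‖ ≤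
        τ * ‖Complex.log z₁ - Complex.log z₂‖) := by
  have had : (0:ℝ) < a * d := by positivity
  have hbc : (0:ℝ) < b * c := by positivity
  have hτ' : τ = (a * d - b * c) / (a * d + b * c) := by
    rw [hτ]; rw [div_eq_div_iff (by positivity) (by positivity)]; field_simp
  have hmap : ∀ z : ℂ, 0 < z.re → 0 < (f z).re := by
    intro z hz; rw [hf]; exact re_pos_aux a b c d ha hb hc hd z hz
  refine ⟨hmap, ?_, ?_⟩
  · rw [hτ]
    rw [div_lt_one (by positivity)]
    have : 0 < b * c / (a * d) := by positivity
    linarith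
  · -- main contraction estimate
    intro z₁ z₂ hz₁ hz₂ _
    set S : Set ℂ := Complex.im ⁻¹' Set.Ioo (-(π / 2)) (π / 2) with hS
    have hconv : Convex ℝ S := (convex_Ioo _ _).linear_preimage Complex.imLm
    set g : ℂ → ℂ := fun w => Complex.log (((a:ℂ) * Complex.exp w + b) / ((c:ℂ) * Complex.exp w + d))
      with hg
    set g' : ℂ → ℂ := fun w => ((a:ℂ) * d - b * c) * Complex.exp w /
      (((a:ℂ) * Complex.exp w + b) * ((c:ℂ) * Complex.exp w + d)) with hg'
    have hre : ∀ w ∈ S, 0 < (Complex.exp w).re := by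
      intro w hw
      rw [Complex.exp_re]
      have : 0 < Real.cos w.im := Real.cos_pos_of_mem_Ioo hw
      positivity
    have hderiv : ∀ w ∈ S, HasDerivWithinAt g (g' w) S w := by
      intro w hw
      set z := Complex.exp w with hz
      have hzre : 0 < z.re := hre w hw
      have hcz : ((c:ℂ) * z + d) ≠ 0 := by
        intro h
        have : ((c:ℂ) * z + d).re = c * z.re + d := by simp [Complex.add_re, Complex.mul_re]
        rw [h] at this; simp at this; nlinarith
      have haz : ((a:ℂ) * z + b) ≠ 0 := by
        intro h
        have : ((a:ℂ) * z + b).re = a * z.re + b := by simp [Complex.add_re, Complex.mul_re]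
        rw [h] at this; simp at this; nlinarith
      have hfz : 0 < (((a:ℂ) * z + b) / ((c:ℂ) * z + d)).re :=
        re_pos_aux a b c d ha hb hc hd z hzre
      have he : HasDerivAt Complex.exp z w := Complex.hasDerivAt_exp w
      have h1 : HasDerivAt (fun w => (a:ℂ) * Complex.exp w + b) ((a:ℂ) * z) w :=
        (he.const_mul (a:ℂ)).add_const (b:ℂ)
      have h2 : HasDerivAt (fun w => (c:ℂ) * Complex.exp w + d) ((c:ℂ) * z) w :=
        (he.const_mul (c:ℂ)).add_const (d:ℂ)
      have hq := h1.div h2 hcz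
      have hslit : ((a:ℂ) * z + b) / ((c:ℂ) * z + d) ∈ Complex.slitPlane :=
        Complex.mem_slitPlane_iff.mpr (Or.inl hfz)
      have hlog := hq.clog hslit
      have heq : ((a:ℂ) * z * ((c:ℂ) * z + d) - ((a:ℂ) * z + b) * ((c:ℂ) * z)) /
            ((c:ℂ) * z + d) ^ 2 / (((a:ℂ) * z + b) / ((c:ℂ) * z + d)) = g' w := by
        rw [hg']
        simp only [← hz]
        field_simp
        ring
      exact (hlog.congr_deriv heq).hasDerivWithinAt
    have hbound : ∀ w ∈ S, ‖g' w‖ ≤ τ := by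
      intro w hw
      set z := Complex.exp w with hz
      have hzre : 0 < z.re := hre w hw
      have hB : 0 < ‖(a:ℂ) * z + b‖ := by
        apply norm_pos_iff.mpr
        intro h
        have : ((a:ℂ) * z + b).re = a * z.re + b := by simp [Complex.add_re, Complex.mul_re]
        rw [h] at this; simp at this; nlinarith
      have hC : 0 < ‖(c:ℂ) * z + d‖ := by
        apply norm_pos_iff.mpr
        intro h
        have : ((c:ℂ) * z + d).re = c * z.re + d := by simp [Complex.add_re, Complex.mul_re]
        rw [h] at this; simp at this; nlinarith
      have habsnum : ‖(a:ℂ) * d - b * c‖ = a * d - b * c := by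
        have : ((a:ℂ) * d - b * c) = ((a * d - b * c : ℝ) : ℂ) := by push_cast; ring
        rw [this]
        rw [Complex.norm_real, Real.norm_eq_abs]
        exact abs_of_nonneg (by linarith)
      have : ‖g' w‖ = (a * d - b * c) * ‖z‖ /
          (‖(a:ℂ) * z + b‖ * ‖(c:ℂ) * z + d‖) := by
        rw [hg']
        rw [norm_div, norm_mul, norm_mul, habsnum]
      rw [this, div_le_iff₀ (by positivity)]
      have hkey := key_ineq a b c d ha hb hc hd z hzre.le
      rw [hτ', div_mul_eq_mul_div, le_div_iff₀ (by positivity)]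
      nlinarith [mul_le_mul_of_nonneg_left hkey (by linarith : (0:ℝ) ≤ a * d - b * c)]
    have hz₁ne : z₁ ≠ 0 := by intro h; rw [h] at hz₁; simp at hz₁
    have hz₂ne : z₂ ≠ 0 := by intro h; rw [h] at hz₂; simp at hz₂
    have hw₁ : Complex.log z₁ ∈ S := by
      have := Complex.abs_arg_lt_pi_div_two_iff.mpr (Or.inl hz₁)
      rw [abs_lt] at this
      simp only [hS, Set.mem_preimage, Set.mem_Ioo, Complex.log_im]
      exact this
    have hw₂ : Complex.log z₂ ∈ S := by
      have := Complex.abs_arg_lt_pi_div_two_iff.mpr (Or.inl hz₂)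
      rw [abs_lt] at this
      simp only [hS, Set.mem_preimage, Set.mem_Ioo, Complex.log_im]
      exact this
    have hmvt := hconv.norm_image_sub_le_of_norm_hasDerivWithin_le hderiv hbound hw₂ hw₁
    have hg1 : g (Complex.log z₁) = Complex.log (f z₁) := by
      rw [hg]; simp only [Complex.exp_log hz₁ne]; rw [hf]
    have hg2 : g (Complex.log z₂) = Complex.log (f z₂) := by
      rw [hg]; simp only [Complex.exp_log hz₂ne]; rw [hf]
    rw [hg1, hg2] at hmvt
    exact hmvt
end

section
/- Let a, b, c, d > 0 be reals with ad - bc ≥ 0 and f(z) = (az + b)/(cz + d). Then sup over z in the open right half-plane of |z f'(z) / f(z)| equals (1 - bc/(ad)) / (1 + bc/(ad)), the supremum being attained in the limit z → ± i √(bd/(ac)). -/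
open Complex Set Filter

lemma aux_formula (a b c d : ℝ) (ha : 0 < a) (hb : 0 < b) (hc : 0 < c) (hd : 0 < d)
    (hdet : b * c ≤ a * d) (z : ℂ) (hz : 0 < z.re) :
    ‖z * deriv (fun w : ℂ => ((a : ℂ) * w + b) / ((c : ℂ) * w + d)) z /
      (((a : ℂ) * z + b) / ((c : ℂ) * z + d))‖ =
    (a*d - b*c) * ‖z‖ / (‖(a:ℂ)*z+b‖ * ‖(c:ℂ)*z+d‖) := by
  have hre1 : 0 < ((a:ℂ)*z+b).re := by
    simp [Complex.add_re, Complex.mul_re]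
    nlinarith
  have hre2 : 0 < ((c:ℂ)*z+d).re := by
    simp [Complex.add_re, Complex.mul_re]
    nlinarith
  have h1 : (a:ℂ)*z+b ≠ 0 := fun h => by simp [h] at hre1
  have h2 : (c:ℂ)*z+d ≠ 0 := fun h => by simp [h] at hre2
  have hda : HasDerivAt (fun w : ℂ => (a:ℂ)*w+b) (a:ℂ) z := by
    simpa using ((hasDerivAt_id z).const_mul (a:ℂ)).add_const (b:ℂ)
  have hdc : HasDerivAt (fun w : ℂ => (c:ℂ)*w+d) (c:ℂ) z := by
    simpa using ((hasDerivAt_id z).const_mul (c:ℂ)).add_const (d:ℂ)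
  have hder := (hda.fun_div hdc h2).deriv
  rw [hder]
  have key : z * (((a:ℂ) * ((c:ℂ)*z+d) - ((a:ℂ)*z+b) * c) / ((c:ℂ)*z+d)^2) /
      (((a:ℂ)*z+b)/((c:ℂ)*z+d)) = ((a*d - b*c : ℝ) : ℂ) * z / (((a:ℂ)*z+b)*((c:ℂ)*z+d)) := by
    field_simp
    push_cast
    ring
  rw [key, norm_div, norm_mul, norm_mul, Complex.norm_real, Real.norm_eq_abs,
    _root_.abs_of_nonneg (by linarith : (0:ℝ) ≤ a*d-b*c)]
lemma aux_bound (a b c d : ℝ) (ha : 0 < a) (hb : 0 < b) (hc : 0 < c) (hd : 0 < d)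
    (z : ℂ) (hz : 0 < z.re) :
    (a*d + b*c) * ‖z‖ ≤ ‖(a:ℂ)*z+b‖ * ‖(c:ℂ)*z+d‖ := by
  have hz0 : z ≠ 0 := fun h => by simp [h] at hz
  set w : ℂ := (a*c : ℝ) * z + (a*d + b*c : ℝ) + (b*d : ℝ) * z⁻¹ with hw
  have hfac : ((a:ℂ)*z+b)*((c:ℂ)*z+d) = z * w := by
    rw [hw]
    field_simp
    push_cast
    ring
  rw [← norm_mul, hfac, norm_mul]
  have hinvre : 0 ≤ z.re / Complex.normSq z :=
    div_nonneg hz.le (Complex.normSq_nonneg z)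
  have hwre : a*d + b*c ≤ w.re := by
    rw [hw]
    simp [Complex.add_re, Complex.mul_re, Complex.ofReal_re, Complex.ofReal_im]
    nlinarith [mul_nonneg (mul_nonneg hb.le hd.le) hinvre, mul_nonneg (mul_nonneg ha.le hc.le) hz.le]
  have habs : a*d + b*c ≤ ‖w‖ := le_trans hwre (Complex.re_le_norm w)
  have := mul_le_mul_of_nonneg_left habs (norm_nonneg z)
  linarith [this]

theorem stmt9 (a b c d : ℝ) (ha : 0 < a) (hb : 0 < b) (hc : 0 < c) (hd : 0 < d)
    (hdet : b * c ≤ a * d) :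
    sSup {r : ℝ | ∃ z : ℂ, 0 < z.re ∧
        r = ‖z * deriv (fun w : ℂ => ((a : ℂ) * w + b) / ((c : ℂ) * w + d)) z /
          (((a : ℂ) * z + b) / ((c : ℂ) * z + d))‖} =
      (1 - b * c / (a * d)) / (1 + b * c / (a * d)) := by
  set S := {r : ℝ | ∃ z : ℂ, 0 < z.re ∧
        r = ‖z * deriv (fun w : ℂ => ((a : ℂ) * w + b) / ((c : ℂ) * w + d)) z /
          (((a : ℂ) * z + b) / ((c : ℂ) * z + d))‖} with hS
  have hMeq : (1 - b * c / (a * d)) / (1 + b * c / (a * d)) = (a*d - b*c)/(a*d + b*c) := by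
    rw [div_eq_div_iff (by positivity) (by positivity)]
    field_simp
  rw [hMeq]
  set M := (a*d - b*c)/(a*d + b*c) with hM
  -- upper bound
  have hub : ∀ r ∈ S, r ≤ M := by
    rintro r ⟨z, hz, rfl⟩
    rw [aux_formula a b c d ha hb hc hd hdet z hz]
    have hB := aux_bound a b c d ha hb hc hd z hz
    have hz0 : z ≠ 0 := fun h => by simp [h] at hz
    have habs : 0 < ‖z‖ := norm_pos_iff.mpr hz0
    have hden : 0 < ‖(a:ℂ)*z+b‖ * ‖(c:ℂ)*z+d‖ :=
      lt_of_lt_of_le (mul_pos (by positivity) habs) hB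
    rw [hM, div_le_div_iff₀ hden (by positivity)]
    nlinarith [mul_nonneg (sub_nonneg.2 hdet) (mul_pos habs (by positivity : (0:ℝ) < a*d+b*c)).le]
  have hne : S.Nonempty := by
    refine ⟨_, 1, by norm_num, rfl⟩
  have hbdd : BddAbove S := ⟨M, hub⟩
  refine le_antisymm (csSup_le hne hub) ?_
  -- lower bound via limit
  set y0 := Real.sqrt (b*d/(a*c)) with hy0def
  have hy0 : 0 < y0 := Real.sqrt_pos.2 (by positivity)
  have hy0sq : y0^2 = b*d/(a*c) := Real.sq_sqrt (by positivity)
  set g : ℝ → ℝ := fun t => (a*d - b*c) * ‖(t:ℂ) + (y0:ℝ) * I‖ /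
      (‖(a:ℂ)*((t:ℂ) + (y0:ℝ)*I)+b‖ * ‖(c:ℂ)*((t:ℂ) + (y0:ℝ)*I)+d‖) with hg
  have hprod : ‖(a:ℂ)*((y0:ℝ) * I)+b‖ * ‖(c:ℂ)*((y0:ℝ) * I)+d‖ =
      y0 * (a*d + b*c) := by
    have e1 : ‖(a:ℂ)*((y0:ℝ) * I)+b‖ = Real.sqrt (b^2 + a^2*y0^2) := by
      rw [Complex.norm_def, Complex.normSq_apply]
      congr 1
      simp [Complex.add_re, Complex.add_im, Complex.mul_re, Complex.mul_im]
      ring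
    have e2 : ‖(c:ℂ)*((y0:ℝ) * I)+d‖ = Real.sqrt (d^2 + c^2*y0^2) := by
      rw [Complex.norm_def, Complex.normSq_apply]
      congr 1
      simp [Complex.add_re, Complex.add_im, Complex.mul_re, Complex.mul_im]
      ring
    rw [e1, e2, ← Real.sqrt_mul (by positivity)]
    rw [show (b^2 + a^2*y0^2) * (d^2 + c^2*y0^2) = (y0 * (a*d+b*c))^2 by
      rw [mul_pow, hy0sq]
      field_simp
      ring]
    exact Real.sqrt_sq (by positivity)
  have hg0 : g 0 = M := by
    rw [hg]
    simp only [Complex.ofReal_zero, zero_add]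
    rw [hprod]
    rw [norm_mul, Complex.norm_real, Real.norm_eq_abs, Complex.norm_I, abs_of_pos hy0, mul_one]
    rw [hM]
    field_simp
  have hgmem : ∀ t : ℝ, 0 < t → g t ∈ S := by
    intro t ht
    have hzre : ((t:ℂ) + (y0:ℝ)*I).re = t := by simp
    refine ⟨(t:ℂ) + (y0:ℝ)*I, by rw [hzre]; exact ht, ?_⟩
    rw [aux_formula a b c d ha hb hc hd hdet _ (by rw [hzre]; exact ht)]
  have hzc : Continuous (fun t : ℝ => (t:ℂ) + (y0:ℝ)*I) :=
    Complex.continuous_ofReal.add continuous_const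
  have hcont : ContinuousAt g 0 := by
    rw [hg]
    apply ContinuousAt.div
    · exact (continuous_const.mul (continuous_norm.comp hzc)).continuousAt
    · exact ((continuous_norm.comp
          ((continuous_const.mul hzc).add continuous_const)).mul
        (continuous_norm.comp
          ((continuous_const.mul hzc).add continuous_const))).continuousAt
    · show ‖(a:ℂ)*(((0:ℝ):ℂ) + (y0:ℝ)*I)+b‖ *
          ‖(c:ℂ)*(((0:ℝ):ℂ) + (y0:ℝ)*I)+d‖ ≠ 0
      rw [Complex.ofReal_zero, zero_add, hprod]
      positivity
  have htend : Tendsto g (nhdsWithin 0 (Ioi 0)) (nhds M) := by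
    rw [← hg0]
    exact hcont.continuousWithinAt
  refine le_of_tendsto htend ?_
  filter_upwards [self_mem_nhdsWithin] with t ht
  exact le_csSup hbdd (hgmem t ht)
end

section
/- On the open right half-plane H, for a Möbius transformation f_T(z) = (az + b)/(cz + d) induced by a strictly positive real 2×2 matrix T = [[a, c],[b, d]], the inequality |Re(z)/z| ≤ |Re(f_T(z))/f_T(z)| holds for all z ∈ H. -/
set_option maxHeartbeats 1000000

theorem stmt13 (a b c d : ℝ) (ha : 0 < a) (hb : 0 < b) (hc : 0 < c) (hd : 0 < d)
    (f : ℂ → ℂ) (hf : ∀ z, f z = ((a : ℂ) * z + b) / ((c : ℂ) * z + d)) :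
    ∀ z : ℂ, 0 < z.re →
      ‖((z.re : ℂ) / z)‖ ≤ ‖(((f z).re : ℂ) / f z)‖ := by
  intro z hz
  set x := z.re with hx
  set y := z.im with hy
  have hzne : z ≠ 0 := by
    intro h
    rw [h] at hx
    simp at hx
    rw [hx] at hz
    exact lt_irrefl 0 hz
  have hD : (0:ℝ) < (c*x+d)^2 + (c*y)^2 := by positivity
  have hden : ((c:ℂ) * z + d) ≠ 0 := by
    intro h
    have := congrArg Complex.re h
    simp [Complex.add_re, Complex.mul_re] at this
    nlinarith
  have hDnormSq : Complex.normSq ((c:ℂ)*z+d) = (c*x+d)^2 + (c*y)^2 := by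
    simp [Complex.normSq_apply, Complex.add_re, Complex.add_im, Complex.mul_re,
      Complex.mul_im, ← hx, ← hy]
    ring
  have hre : (f z).re = (a*c*(x^2+y^2)+(a*d+b*c)*x+b*d) / ((c*x+d)^2 + (c*y)^2) := by
    rw [hf, Complex.div_re, hDnormSq]
    simp [Complex.add_re, Complex.add_im, Complex.mul_re, Complex.mul_im, ← hx, ← hy]
    ring
  have him : (f z).im = ((a*d-b*c)*y) / ((c*x+d)^2 + (c*y)^2) := by
    rw [hf, Complex.div_im, hDnormSq]
    simp [Complex.add_re, Complex.add_im, Complex.mul_re, Complex.mul_im, ← hx, ← hy]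
    ring
  have hRpos : 0 < (f z).re := by
    rw [hre]
    apply div_pos _ hD
    nlinarith [mul_nonneg (mul_nonneg ha.le hc.le) (add_nonneg (sq_nonneg x) (sq_nonneg y)),
      mul_pos (add_pos (mul_pos ha hd) (mul_pos hb hc)) hz, mul_pos hb hd]
  have hwne : f z ≠ 0 := fun h => by rw [h] at hRpos; simp at hRpos
  -- reduce to normSq inequality
  rw [Complex.norm_def, Complex.norm_def]
  apply Real.sqrt_le_sqrt
  rw [map_div₀, map_div₀, Complex.normSq_ofReal, Complex.normSq_ofReal]
  have hnz : 0 < Complex.normSq z := Complex.normSq_pos.mpr hzne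
  have hnw : 0 < Complex.normSq (f z) := Complex.normSq_pos.mpr hwne
  rw [div_le_div_iff₀ hnz hnw]
  rw [Complex.normSq_apply z, Complex.normSq_apply (f z), ← hx, ← hy]
  -- suffices x^2 * (f z).im^2 ≤ (f z).re^2 * y^2
  have hN : x * x * ((a*d-b*c)*(a*d-b*c)) ≤
      (a*c*(x^2+y^2)+(a*d+b*c)*x+b*d) * (a*c*(x^2+y^2)+(a*d+b*c)*x+b*d) := by
    nlinarith [mul_nonneg (mul_nonneg ha.le hc.le) (add_nonneg (sq_nonneg x) (sq_nonneg y)),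
      mul_pos (mul_pos ha hb) (mul_pos hc hd), mul_pos hb hd, sq_nonneg x,
      mul_pos (add_pos (mul_pos ha hd) (mul_pos hb hc)) hz,
      mul_nonneg (mul_nonneg (mul_nonneg ha.le hc.le) (add_nonneg (sq_nonneg x) (sq_nonneg y))) (mul_pos (add_pos (mul_pos ha hd) (mul_pos hb hc)) hz).le]
  have key : x * x * ((f z).im * (f z).im) ≤ (f z).re * (f z).re * (y * y) := by
    have hDne : ((c*x+d)^2+(c*y)^2) ≠ 0 := hD.ne'
    obtain ⟨D, hDdef⟩ : ∃ D : ℝ, D = (c*x+d)^2 + (c*y)^2 := ⟨_, rfl⟩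
    obtain ⟨N, hNdef⟩ : ∃ N : ℝ, N = a*c*(x^2+y^2)+(a*d+b*c)*x+b*d := ⟨_, rfl⟩
    rw [← hDdef] at hre him hD
    rw [← hNdef] at hre hN
    rw [hre, him]
    have h1 : x * x * ((a*d-b*c)*y/D * ((a*d-b*c)*y/D))
        = (x*x*(((a*d-b*c)*y)*((a*d-b*c)*y)))/(D*D) := by ring
    have h2 : N/D * (N/D) * (y*y) = (N*N*(y*y))/(D*D) := by ring
    rw [h1, h2, div_le_div_iff₀ (by positivity) (by positivity)]
    nlinarith [mul_le_mul_of_nonneg_right hN (mul_self_nonneg y),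
      mul_pos hD hD, mul_self_nonneg y]
  nlinarith [key]
end

section
/- In the 2-dimensional case, the metric d_P(w, v) = log of the ratio of max over (i,j) to min over (i,j) of (|w̄_i v_j + w̄_j v_i| ± |w_i v_j - w_j v_i|)/(2 Re(w̄_i w_j)), when transformed via z_1 = w_2/w_1 and z_2 = v_2/v_1, reduces to the Poincaré metric on the right half-plane: d_P(z_1, z_2) = log((|z_1 + z̄_2| + |z_1 - z_2|)/(|z_1 + z̄_2| - |z_1 - z_2|)). -/
set_option maxHeartbeats 1000000
open ComplexConjugate

lemma key_ineq_s16 (a b : ℂ) (ha : 0 < a.re) :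
    ‖a‖ * (‖a + conj b‖ - ‖a - b‖) ≤
      2 * a.re * ‖b‖ := by
  have hid : (a * conj a) * (a + conj b)
      = a ^ 2 * conj (a - b) + ((2 * a.re : ℝ) : ℂ) * (a * conj b) := by
    have h2 : ((2 * a.re : ℝ) : ℂ) = a + conj a := by
      rw [Complex.add_conj]
    rw [h2, map_sub]; ring
  have h1 : ‖(a * conj a) * (a + conj b)‖ ≤
      ‖a ^ 2 * conj (a - b)‖ +
        ‖((2 * a.re : ℝ) : ℂ) * (a * conj b)‖ := by
    rw [hid]; exact norm_add_le _ _
  rw [norm_mul, norm_mul, norm_mul, norm_mul, norm_mul, norm_pow, Complex.norm_conj,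
    Complex.norm_conj, Complex.norm_conj, Complex.norm_real, Real.norm_eq_abs,
    abs_of_pos (by positivity)] at h1
  have hA : 0 < ‖a‖ := by
    apply norm_pos_iff.mpr
    intro h; rw [h] at ha; simp at ha
  nlinarith [h1, hA, norm_nonneg b]

theorem stmt16 (w v : Fin 2 → ℂ) (hw : w 0 + w 1 = 1) (hv : v 0 + v 1 = 1)
    (z₁ z₂ : ℂ) (hz1 : z₁ = w 1 / w 0) (hz2 : z₂ = v 1 / v 0)
    (h1 : 0 < z₁.re) (h2 : 0 < z₂.re) :
    Real.log
        ((⨆ p : Fin 2 × Fin 2,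
            (‖conj (w p.1) * v p.2 + conj (w p.2) * v p.1‖ +
              ‖w p.1 * v p.2 - w p.2 * v p.1‖) /
              (2 * (conj (w p.1) * w p.2).re)) /
          (⨅ p : Fin 2 × Fin 2,
            (‖conj (w p.1) * v p.2 + conj (w p.2) * v p.1‖ -
              ‖w p.1 * v p.2 - w p.2 * v p.1‖) /
              (2 * (conj (w p.1) * w p.2).re))) =
      Real.log ((‖z₁ + conj z₂‖ + ‖z₁ - z₂‖) /
        (‖z₁ + conj z₂‖ - ‖z₁ - z₂‖)) := by
  have hz1ne : z₁ ≠ 0 := by intro h; rw [h] at h1; simp at h1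
  have hz2ne : z₂ ≠ 0 := by intro h; rw [h] at h2; simp at h2
  have hw0 : w 0 ≠ 0 := by
    intro h; rw [h, div_zero] at hz1; exact hz1ne hz1
  have hv0 : v 0 ≠ 0 := by
    intro h; rw [h, div_zero] at hz2; exact hz2ne hz2
  have hw1 : w 1 = z₁ * w 0 := by rw [hz1]; field_simp
  have hv1 : v 1 = z₂ * v 0 := by rw [hz2]; field_simp
  set c := ‖w 0‖ with hc_def
  set d := ‖v 0‖ with hd_def
  set m := ‖z₁‖ with hm_def
  set n := ‖z₂‖ with hn_def
  set S := ‖z₁ + conj z₂‖ with hS_def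
  set D := ‖z₁ - z₂‖ with hD_def
  set r1 := z₁.re with hr1_def
  set r2 := z₂.re with hr2_def
  have hc : 0 < c := norm_pos_iff.mpr hw0
  have hd : 0 < d := norm_pos_iff.mpr hv0
  have hm : 0 < m := norm_pos_iff.mpr hz1ne
  have hn : 0 < n := norm_pos_iff.mpr hz2ne
  have hrm : r1 ≤ m := Complex.re_le_norm z₁
  have hrn : r2 ≤ n := Complex.re_le_norm z₂
  have hS1 : r1 + r2 ≤ S := by
    have : (z₁ + conj z₂).re = r1 + r2 := by
      simp [Complex.add_re, Complex.conj_re]; rfl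
    rw [← this]; exact Complex.re_le_norm _
  have hD1 : |r1 - r2| ≤ D := by
    have : (z₁ - z₂).re = r1 - r2 := by simp [Complex.sub_re]; rfl
    rw [← this]; exact Complex.abs_re_le_norm _
  have hD2 : r1 - r2 ≤ D := le_trans (le_abs_self _) hD1
  have hD3 : r2 - r1 ≤ D := le_trans (by rw [abs_sub_comm]; exact le_abs_self _) hD1
  have hSD : S ^ 2 - D ^ 2 = 4 * r1 * r2 := by
    rw [hS_def, hD_def, Complex.sq_norm, Complex.sq_norm,
      Complex.normSq_apply, Complex.normSq_apply]
    simp only [Complex.add_re, Complex.add_im, Complex.sub_re, Complex.sub_im,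
      Complex.conj_re, Complex.conj_im, hr1_def, hr2_def]
    try ring
  have hK1 : m * (S - D) ≤ 2 * r1 * n := key_ineq_s16 z₁ z₂ h1
  have hK2 : n * (S - D) ≤ 2 * r2 * m := by
    have e1 : ‖z₂ + conj z₁‖ = S := by
      rw [show z₂ + conj z₁ = conj (z₁ + conj z₂) by
        rw [map_add, Complex.conj_conj]; ring, Complex.norm_conj]
    have e2 : ‖z₂ - z₁‖ = D := by
      rw [hD_def, norm_sub_rev]
    have := key_ineq_s16 z₂ z₁ h2
    rw [e1, e2] at this; exact this
  have hSp1 : 2 * r1 ≤ S + D := by linarith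
  have hSp2 : 2 * r2 ≤ S + D := by linarith
  have hSDpos : 0 < S - D := by nlinarith
  have hSpos : 0 < S + D := by linarith
  have hprod : (S + D) * (S - D) = 4 * r1 * r2 := by linear_combination hSD
  have hA2 : 2 * r1 * n ≤ m * (S + D) := by
    nlinarith [mul_le_mul_of_nonneg_left hK2 h1.le, hprod, hSDpos, hm.le]
  have hB1 : S - D ≤ 2 * r1 := by
    nlinarith [mul_le_mul_of_nonneg_left hSp2 h1.le, hprod, hSpos]
  -- value computations
  have n00 : ‖conj (w 0) * v 0 + conj (w 0) * v 0‖ = 2 * (c * d) := by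
    rw [show conj (w 0) * v 0 + conj (w 0) * v 0 = 2 * (conj (w 0) * v 0) by ring,
      norm_mul, norm_mul, Complex.norm_conj, Complex.norm_two]
  have n01 : ‖conj (w 0) * v 1 + conj (w 1) * v 0‖ = c * d * S := by
    rw [hw1, hv1,
      show conj (w 0) * (z₂ * v 0) + conj (z₁ * w 0) * v 0
        = (conj (w 0) * v 0) * conj (z₁ + conj z₂) by
          rw [map_mul, map_add, Complex.conj_conj]; ring,
      norm_mul, norm_mul, Complex.norm_conj, Complex.norm_conj]
  have n10 : ‖conj (w 1) * v 0 + conj (w 0) * v 1‖ = c * d * S := by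
    rw [show conj (w 1) * v 0 + conj (w 0) * v 1
      = conj (w 0) * v 1 + conj (w 1) * v 0 by ring, n01]
  have n11 : ‖conj (w 1) * v 1 + conj (w 1) * v 1‖ = 2 * (m * c * (n * d)) := by
    rw [hw1, hv1,
      show conj (z₁ * w 0) * (z₂ * v 0) + conj (z₁ * w 0) * (z₂ * v 0)
        = 2 * (conj z₁ * conj (w 0) * (z₂ * v 0)) by rw [map_mul]; ring,
      norm_mul, norm_mul, norm_mul, norm_mul, Complex.norm_conj, Complex.norm_conj,
      Complex.norm_two]
    try ring
  have m00 : ‖w 0 * v 0 - w 0 * v 0‖ = 0 := by simp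
  have m11 : ‖w 1 * v 1 - w 1 * v 1‖ = 0 := by simp
  have m01 : ‖w 0 * v 1 - w 1 * v 0‖ = c * d * D := by
    rw [hw1, hv1,
      show w 0 * (z₂ * v 0) - z₁ * w 0 * v 0 = (w 0 * v 0) * (z₂ - z₁) by ring,
      norm_mul, norm_mul, norm_sub_rev]
  have m10 : ‖w 1 * v 0 - w 0 * v 1‖ = c * d * D := by
    rw [norm_sub_rev, m01]
  have d00 : (conj (w 0) * w 0).re = c ^ 2 := by
    rw [hc_def, Complex.sq_norm, Complex.normSq_apply]
    simp [Complex.mul_re, Complex.conj_re, Complex.conj_im]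
    try ring
  have d11 : (conj (w 1) * w 1).re = m ^ 2 * c ^ 2 := by
    rw [hw1, hm_def, hc_def, Complex.sq_norm, Complex.sq_norm,
      Complex.normSq_apply, Complex.normSq_apply]
    simp [Complex.mul_re, Complex.mul_im, Complex.conj_re, Complex.conj_im]
    try ring
  have d01 : (conj (w 0) * w 1).re = r1 * c ^ 2 := by
    rw [hw1, hr1_def, hc_def, Complex.sq_norm, Complex.normSq_apply]
    simp [Complex.mul_re, Complex.mul_im, Complex.conj_re, Complex.conj_im]
    try ring
  have d10 : (conj (w 1) * w 0).re = r1 * c ^ 2 := by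
    rw [hw1, hr1_def, hc_def, Complex.sq_norm, Complex.normSq_apply]
    simp [Complex.mul_re, Complex.mul_im, Complex.conj_re, Complex.conj_im]
    try ring
  -- the sup
  have hsup : (⨆ p : Fin 2 × Fin 2,
      (‖conj (w p.1) * v p.2 + conj (w p.2) * v p.1‖ +
        ‖w p.1 * v p.2 - w p.2 * v p.1‖) /
        (2 * (conj (w p.1) * w p.2).re))
      = (c * d * S + c * d * D) / (2 * (r1 * c ^ 2)) := by
    apply le_antisymm
    · apply ciSup_le
      rintro ⟨i, j⟩
      fin_cases i <;> fin_cases j <;> dsimp only <;>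
        simp only [Fin.mk_zero, Fin.mk_one]
      · rw [n00, m00, d00, div_le_div_iff₀ (by positivity) (by positivity)]
        linarith [mul_le_mul_of_nonneg_left hSp1 (by positivity : (0:ℝ) ≤ c ^ 2 * (c * d))]
      · rw [n01, m01, d01]
      · rw [n10, m10, d10]
      · rw [n11, m11, d11, div_le_div_iff₀ (by positivity) (by positivity)]
        linarith [mul_le_mul_of_nonneg_left hA2 (by positivity : (0:ℝ) ≤ m * (c ^ 2 * (c * d)))]
    · have := le_ciSup (f := fun p : Fin 2 × Fin 2 =>
        (‖conj (w p.1) * v p.2 + conj (w p.2) * v p.1‖ +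
          ‖w p.1 * v p.2 - w p.2 * v p.1‖) /
          (2 * (conj (w p.1) * w p.2).re))
        (Set.Finite.bddAbove (Set.finite_range _)) ((0 : Fin 2), (1 : Fin 2))
      dsimp only at this
      rwa [n01, m01, d01] at this
  -- the inf
  have hinf : (⨅ p : Fin 2 × Fin 2,
      (‖conj (w p.1) * v p.2 + conj (w p.2) * v p.1‖ -
        ‖w p.1 * v p.2 - w p.2 * v p.1‖) /
        (2 * (conj (w p.1) * w p.2).re))
      = (c * d * S - c * d * D) / (2 * (r1 * c ^ 2)) := by
    clear hsup
    apply le_antisymm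
    · have := ciInf_le (f := fun p : Fin 2 × Fin 2 =>
        (‖conj (w p.1) * v p.2 + conj (w p.2) * v p.1‖ -
          ‖w p.1 * v p.2 - w p.2 * v p.1‖) /
          (2 * (conj (w p.1) * w p.2).re))
        (Set.Finite.bddBelow (Set.finite_range _)) ((0 : Fin 2), (1 : Fin 2))
      dsimp only at this
      rwa [n01, m01, d01] at this
    · apply le_ciInf
      rintro ⟨i, j⟩
      fin_cases i <;> fin_cases j <;> dsimp only <;>
        simp only [Fin.mk_zero, Fin.mk_one]
      · rw [n00, m00, d00, div_le_div_iff₀ (by positivity) (by positivity)]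
        linarith [mul_le_mul_of_nonneg_left hB1 (by positivity : (0:ℝ) ≤ c ^ 2 * (c * d))]
      · rw [n01, m01, d01]
      · rw [n10, m10, d10]
      · rw [n11, m11, d11, div_le_div_iff₀ (by positivity) (by positivity)]
        linarith [mul_le_mul_of_nonneg_left hK1 (by positivity : (0:ℝ) ≤ m * (c ^ 2 * (c * d)))]
  rw [hsup, hinf]
  congr 1
  have hne2 : S - D ≠ 0 := ne_of_gt hSDpos
  have hne1 : c * d * S - c * d * D ≠ 0 := by
    have : 0 < c * d * (S - D) := by positivity
    intro h; apply ne_of_gt this; linarith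
  have hr1ne : r1 ≠ 0 := ne_of_gt h1
  have hcne : c ≠ 0 := ne_of_gt hc
  have hdne : d ≠ 0 := ne_of_gt hd
  field_simp
end

section
/- Let Π be a 2×2 positive stochastic matrix with det Π > 0 and 0 < ε_0 < 1/2, and let S = [S_1, S_2] = [ε_0 π_10 / ((1−ε_0) π_11), (1−ε_0) π_00 / (ε_0 π_01)]. Then S_1 ≤ S_2, and both maps f^{ε_0}_0 and f^{ε_0}_1 (with f^ε_z(x) = (p_E(z)/p_E(z̄))(π_00 x + π_10)/(π_01 x + π_11), p_E(0)=ε, p_E(1)=1−ε) map [0, ∞] into S; i.e., S contains the union f^{ε_0}_0([0,∞]) ∪ f^{ε_0}_1([0,∞]). -/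
theorem stmt19 (π00 π01 π10 π11 : ℝ)
    (h00 : 0 < π00) (h01 : 0 < π01) (h10 : 0 < π10) (h11 : 0 < π11)
    (hrow0 : π00 + π01 = 1) (hrow1 : π10 + π11 = 1)
    (hdet : π01 * π10 < π00 * π11)
    (ε0 : ℝ) (hε0 : 0 < ε0) (hε1 : ε0 < 1 / 2)
    (S1 S2 : ℝ) (hS1 : S1 = ε0 * π10 / ((1 - ε0) * π11))
    (hS2 : S2 = (1 - ε0) * π00 / (ε0 * π01))
    (pE : Fin 2 → ℝ) (hpE0 : pE 0 = ε0) (hpE1 : pE 1 = 1 - ε0) :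
    S1 ≤ S2 ∧
    (∀ zz : Fin 2, ∀ x : ℝ, 0 ≤ x →
      pE zz / pE (1 - zz) * ((π00 * x + π10) / (π01 * x + π11)) ∈ Set.Icc S1 S2) ∧
    (∀ zz : Fin 2, pE zz / pE (1 - zz) * (π00 / π01) ∈ Set.Icc S1 S2) := by
  have hε2 : (0:ℝ) < 1 - ε0 := by linarith
  have hrr : ε0 / (1 - ε0) ≤ (1 - ε0) / ε0 := by
    rw [div_le_div_iff₀ hε2 hε0]; nlinarith
  have hS1' : S1 = ε0 / (1 - ε0) * (π10 / π11) := by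
    rw [hS1]; field_simp
  have hS2' : S2 = (1 - ε0) / ε0 * (π00 / π01) := by
    rw [hS2]; field_simp
  have h1 : 0 ≤ ε0 / (1 - ε0) := by positivity
  have h2 : 0 ≤ (1 - ε0) / ε0 := by positivity
  have key : ∀ f : ℝ, π10 / π11 ≤ f → f ≤ π00 / π01 →
      (ε0 / (1 - ε0) * f ∈ Set.Icc S1 S2 ∧
       (1 - ε0) / ε0 * f ∈ Set.Icc S1 S2) := by
    intro f hl hu
    have hfpos : 0 ≤ f := le_trans (by positivity) hl
    refine ⟨⟨?_, ?_⟩, ?_, ?_⟩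
    · rw [hS1']; exact mul_le_mul_of_nonneg_left hl h1
    · rw [hS2']; exact mul_le_mul hrr hu hfpos h2
    · rw [hS1']
      exact le_trans (mul_le_mul_of_nonneg_left hl h1)
        (mul_le_mul_of_nonneg_right hrr hfpos)
    · rw [hS2']; exact mul_le_mul_of_nonneg_left hu h2
  have bounds : ∀ x : ℝ, 0 ≤ x →
      π10 / π11 ≤ (π00 * x + π10) / (π01 * x + π11) ∧
      (π00 * x + π10) / (π01 * x + π11) ≤ π00 / π01 := by
    intro x hx
    have hd : 0 < π01 * x + π11 := by nlinarith
    constructor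
    · rw [div_le_div_iff₀ h11 hd]; nlinarith
    · rw [div_le_div_iff₀ hd h01]; nlinarith
  refine ⟨?_, ?_, ?_⟩
  · rw [hS1', hS2']
    have h3 : π10 / π11 ≤ π00 / π01 := by
      rw [div_le_div_iff₀ h11 h01]; nlinarith
    have hfpos : 0 ≤ π10 / π11 := by positivity
    exact le_trans (mul_le_mul_of_nonneg_left h3 h1)
      (mul_le_mul_of_nonneg_right hrr (le_trans hfpos h3))
  · intro zz x hx
    obtain ⟨hl, hu⟩ := bounds x hx
    fin_cases zz
    · simpa [hpE0, hpE1] using (key _ hl hu).1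
    · simpa [hpE0, hpE1] using (key _ hl hu).2
  · intro zz
    have h3 : π10 / π11 ≤ π00 / π01 := by
      rw [div_le_div_iff₀ h11 h01]; nlinarith
    fin_cases zz
    · simpa [hpE0, hpE1] using (key _ h3 le_rfl).1
    · simpa [hpE0, hpE1] using (key _ h3 le_rfl).2
end
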